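/- arXiv:2511.01420 — 3 statements merged into one kernel-verified Lean document; each statement's English description precedes it below -/
import Mathlib

section
/- Assume the execution is admissible. Let s ∈ ℕ be such that every directed cycle has nonnegative ω^s-weight. Then for every node v ∈ V and all times t < t', Ψ_v^s(t') ≤ Ψ_v^s(t) + (ϑ−1)·(t'−t). -/
open SimpleGraph

namespace GCS

variable {V : Type*}

def edgeWt (δ O : V → V → ℝ) (s : ℝ) (v w : V) : ℝ :=
  4 * s * δ v w - O v w

def walkWt {G : SimpleGraph V} (δ O : V → V → ℝ) (s : ℝ) {v w : V}
    (p : G.Walk v w) : ℝ :=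
  (p.darts.map fun d => edgeWt δ O s d.toProd.1 d.toProd.2).sum

def NonnegCycles (G : SimpleGraph V) (δ O : V → V → ℝ) (s : ℝ) : Prop :=
  ∀ (v : V) (c : G.Walk v v), c.IsCycle → 0 ≤ walkWt δ O s c

noncomputable def dS (G : SimpleGraph V) (δ O : V → V → ℝ) (s : ℝ) (v w : V) : ℝ :=
  sInf {x : ℝ | ∃ p : G.Walk v w, walkWt δ O s p = x}

noncomputable def Psi (G : SimpleGraph V) (δ O : V → V → ℝ) (s : ℝ)
    (L : V → ℝ → ℝ) (v : V) (t : ℝ) : ℝ :=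
  sSup {x : ℝ | ∃ w : V, ∃ p : G.Walk v w, x = L w t - L v t - walkWt δ O s p}

noncomputable def PsiAll (G : SimpleGraph V) (δ O : V → V → ℝ) (s : ℝ)
    (L : V → ℝ → ℝ) (t : ℝ) : ℝ :=
  ⨆ v : V, Psi G δ O s L v t

noncomputable def PsiE (G : SimpleGraph V) (δ O : V → V → ℝ) (s : ℝ)
    (L : V → ℝ → ℝ) (v : V) (t : ℝ) : EReal :=
  ⨆ w : V, ⨆ p : G.Walk v w, ((L w t - L v t - walkWt δ O s p : ℝ) : EReal)

def SlowCondAt (G : SimpleGraph V) (δ O : V → V → ℝ) (L : V → ℝ → ℝ)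
    (v : V) (t : ℝ) (s : ℕ) : Prop :=
  (∃ w, G.Adj v w ∧ 4 * (s : ℝ) * δ v w ≤ L v t - L w t - O v w) ∧
  (∀ w, G.Adj v w → -(4 * (s : ℝ) * δ v w) ≤ L v t - L w t - O v w)

def FastCondAt (G : SimpleGraph V) (δ O : V → V → ℝ) (L : V → ℝ → ℝ)
    (v : V) (t : ℝ) (s : ℕ) : Prop :=
  (∃ w, G.Adj v w ∧ L v t - L w t - O v w ≤ -((4 * (s : ℝ) + 2) * δ v w)) ∧
  (∀ w, G.Adj v w → L v t - L w t - O v w ≤ (4 * (s : ℝ) + 2) * δ v w)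

def Admissible (G : SimpleGraph V) (δ O : V → V → ℝ) (L : V → ℝ → ℝ)
    (ϑ μ : ℝ) : Prop :=
  ∀ (v : V) (t : ℝ),
    ((∃ s : ℕ, SlowCondAt G δ O L v t s) → deriv (L v) t ≤ ϑ) ∧
    ((∃ s : ℕ, FastCondAt G δ O L v t s) → 1 + μ ≤ deriv (L v) t)

def AdmissibleOn (G : SimpleGraph V) (δ O : V → V → ℝ) (L : V → ℝ → ℝ)
    (ϑ μ : ℝ) (a b : ℝ) : Prop :=
  ∀ (v : V), ∀ t ∈ Set.Icc a b,
    ((∃ s : ℕ, SlowCondAt G δ O L v t s) → deriv (L v) t ≤ ϑ) ∧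
    ((∃ s : ℕ, FastCondAt G δ O L v t s) → 1 + μ ≤ deriv (L v) t)

/-! ### Auxiliary lemmas -/

lemma walkWt_nil {G : SimpleGraph V} {δ O : V → V → ℝ} {s : ℝ} {v : V} :
    walkWt δ O s (Walk.nil : G.Walk v v) = 0 := rfl

lemma walkWt_cons {G : SimpleGraph V} {δ O : V → V → ℝ} {s : ℝ} {u v w : V}
    (h : G.Adj u v) (p : G.Walk v w) :
    walkWt δ O s (Walk.cons h p) = edgeWt δ O s u v + walkWt δ O s p := by
  simp [walkWt]

lemma walkWt_append {G : SimpleGraph V} {δ O : V → V → ℝ} {s : ℝ} {u v w : V}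
    (p : G.Walk u v) (q : G.Walk v w) :
    walkWt δ O s (p.append q) = walkWt δ O s p + walkWt δ O s q := by
  simp [walkWt, Walk.darts_append]

lemma walkWt_concat {G : SimpleGraph V} {δ O : V → V → ℝ} {s : ℝ} {u v w : V}
    (p : G.Walk u v) (h : G.Adj v w) :
    walkWt δ O s (p.concat h) = walkWt δ O s p + edgeWt δ O s v w := by
  simp [walkWt, Walk.darts_concat]

/-- A path from `v` to `u` containing the edge `s(u,v)` is a single edge. -/
lemma path_edge_eq {G : SimpleGraph V} {u v : V} (q : G.Walk v u) (hq : q.IsPath)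
    (he : s(u, v) ∈ q.edges) : ∃ h' : G.Adj v u, q = Walk.cons h' Walk.nil := by
  cases q with
  | nil => simp at he
  | @cons _ x _ h' q' =>
    rw [Walk.cons_isPath_iff] at hq
    rw [Walk.edges_cons, List.mem_cons] at he
    rcases he with he | he
    · have hxu : x = u := by
        rw [Sym2.eq_iff] at he
        rcases he with ⟨h1, h2⟩ | ⟨h1, h2⟩
        · exact absurd (h2 ▸ h') (G.loopless.irrefl v)
        · first | exact h2 | exact h1 | exact h1.symm | exact h2.symm
      subst hxu
      have : q' = Walk.nil := (Walk.isPath_iff_eq_nil (p := q')).1 hq.1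
      exact ⟨h', by rw [this]⟩
    · exact absurd (Walk.snd_mem_support_of_mem_edges q' he) hq.2

/-- Closing an edge with a path gives a nonnegative total weight. -/
lemma closed_nonneg {G : SimpleGraph V} {δ O : V → V → ℝ} {s : ℝ} (hs : 0 ≤ s)
    (hδpos : ∀ v w, G.Adj v w → 0 < δ v w)
    (hδsym : ∀ v w, G.Adj v w → δ v w = δ w v)
    (hOanti : ∀ v w, G.Adj v w → O v w = -O w v)
    (hnc : NonnegCycles G δ O s)
    {u v : V} (h : G.Adj u v) (q : G.Walk v u) (hq : q.IsPath) :
    0 ≤ edgeWt δ O s u v + walkWt δ O s q := by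
  by_cases he : s(u, v) ∈ q.edges
  · obtain ⟨h', hq'⟩ := path_edge_eq q hq he
    subst hq'
    rw [walkWt_cons, walkWt_nil]
    have h1 := hδpos u v h
    have h2 := hδsym u v h
    have h3 := hOanti u v h
    simp only [edgeWt]
    nlinarith
  · have hc : (Walk.cons h q).IsCycle := (Walk.cons_isCycle_iff q h).2 ⟨hq, he⟩
    have := hnc u (Walk.cons h q) hc
    rwa [walkWt_cons] at this

/-- Bypassing a walk does not increase its weight. -/
lemma bypass_wt_le {G : SimpleGraph V} {δ O : V → V → ℝ} {s : ℝ} (hs : 0 ≤ s)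
    (hδpos : ∀ v w, G.Adj v w → 0 < δ v w)
    (hδsym : ∀ v w, G.Adj v w → δ v w = δ w v)
    (hOanti : ∀ v w, G.Adj v w → O v w = -O w v)
    (hnc : NonnegCycles G δ O s)
    [DecidableEq V] {u v : V} (p : G.Walk u v) :
    walkWt δ O s p.bypass ≤ walkWt δ O s p := by
  induction p with
  | nil => simp [Walk.bypass]
  | @cons a b c h p ih =>
    simp only [Walk.bypass]
    split_ifs with hmem
    · have hsplit : walkWt δ O s (p.bypass.takeUntil a hmem) +
          walkWt δ O s (p.bypass.dropUntil a hmem) = walkWt δ O s p.bypass := by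
        rw [← walkWt_append, Walk.take_spec]
      have h7 := closed_nonneg hs hδpos hδsym hOanti hnc h
        (p.bypass.takeUntil a hmem) ((p.bypass_isPath).takeUntil hmem)
      rw [walkWt_cons]
      linarith
    · rw [walkWt_cons, walkWt_cons]
      linarith

lemma exists_concat_of_not_nil {G : SimpleGraph V} {u v : V} (p : G.Walk u v)
    (hp : ¬ p.Nil) : ∃ (x : V) (q : G.Walk u x) (h : G.Adj x v), p = q.concat h := by
  cases p with
  | nil => exact absurd Walk.nil_nil hp
  | cons h q => exact Walk.exists_cons_eq_concat h q

/-- Continuity of a finite `sup'` of continuous functions. -/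
lemma continuous_finset_sup'_fun {ι : Type*} {s : Finset ι} (hs : s.Nonempty) {g : ι → ℝ → ℝ}
    (hg : ∀ i, Continuous (g i)) : Continuous fun τ => s.sup' hs fun i => g i τ := by
  induction hs using Finset.Nonempty.cons_induction with
  | singleton a => simpa using hg a
  | cons a s h hs ih =>
    have heq : (fun τ => (Finset.cons a s h).sup' (Finset.cons_nonempty h) fun i => g i τ)
        = fun τ => max (g a τ) (s.sup' hs fun i => g i τ) :=
      funext fun τ => Finset.sup'_cons hs (fun i => g i τ)
    rw [heq]
    exact (hg a).max ih

end GCS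

/-- `Ψ_v^s(t') ≤ Ψ_v^s(t) + (ϑ-1)(t'-t)` for all `v` and `t < t'`. -/
theorem waitup_cor
    {V : Type*} [Fintype V] [DecidableEq V] [Nonempty V]
    (G : SimpleGraph V) (hconn : G.Connected)
    (δ O : V → V → ℝ)
    (hδpos : ∀ v w, G.Adj v w → 0 < δ v w)
    (hδsym : ∀ v w, G.Adj v w → δ v w = δ w v)
    (hOanti : ∀ v w, G.Adj v w → O v w = -O w v)
    (L : V → ℝ → ℝ) (ϑ μ : ℝ) (hϑ : 1 < ϑ) (hμ : 0 < μ)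
    (hdiff : ∀ v, Differentiable ℝ (L v))
    (hlo : ∀ (v : V) (t : ℝ), 1 ≤ deriv (L v) t)
    (hhi : ∀ (v : V) (t : ℝ), deriv (L v) t ≤ ϑ * (1 + μ))
    (hadm : GCS.Admissible G δ O L ϑ μ)
    (s : ℕ) (hnc : GCS.NonnegCycles G δ O (s : ℝ))
    (v : V) (t t' : ℝ) (htt' : t < t') :
    GCS.Psi G δ O (s : ℝ) L v t' ≤
      GCS.Psi G δ O (s : ℝ) L v t + (ϑ - 1) * (t' - t) := by
  classical
  have hs0 : (0 : ℝ) ≤ (s : ℝ) := Nat.cast_nonneg s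
  -- the minimal path weight from `v` to `w`
  have hPne : ∀ w : V,
      (Finset.univ.image fun p : G.Path v w => GCS.walkWt δ O (s : ℝ) p.1).Nonempty := by
    intro w
    obtain ⟨q⟩ := hconn.preconnected v w
    exact ⟨_, Finset.mem_image_of_mem _ (Finset.mem_univ ⟨q.bypass, q.bypass_isPath⟩)⟩
  set m : V → ℝ := fun w =>
    (Finset.univ.image fun p : G.Path v w => GCS.walkWt δ O (s : ℝ) p.1).min' (hPne w) with hmdef
  have hm_le : ∀ (w : V) (p : G.Walk v w), m w ≤ GCS.walkWt δ O (s : ℝ) p := by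
    intro w p
    have h1 : m w ≤ GCS.walkWt δ O (s : ℝ) p.bypass :=
      Finset.min'_le _ _ (Finset.mem_image_of_mem _ (Finset.mem_univ (⟨p.bypass, p.bypass_isPath⟩ : G.Path v w)))
    exact h1.trans (GCS.bypass_wt_le hs0 hδpos hδsym hOanti hnc p)
  have hm_ex : ∀ w : V, ∃ p : G.Walk v w, GCS.walkWt δ O (s : ℝ) p = m w := by
    intro w
    have := Finset.min'_mem _ (hPne w)
    rw [Finset.mem_image] at this
    obtain ⟨p, -, hp⟩ := this
    exact ⟨p.1, hp⟩
  -- the finite-max formula for Ψ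
  set f : ℝ → ℝ := fun τ => Finset.univ.sup' Finset.univ_nonempty
    (fun w => L w τ - L v τ - m w) with hfdef
  have hub : ∀ τ (x : ℝ),
      x ∈ {x : ℝ | ∃ w : V, ∃ p : G.Walk v w, x = L w τ - L v τ - GCS.walkWt δ O (s:ℝ) p} →
      x ≤ f τ := by
    rintro τ x ⟨w, p, rfl⟩
    have h1 := hm_le w p
    have h2 : L w τ - L v τ - m w ≤ f τ :=
      Finset.le_sup' (fun w => L w τ - L v τ - m w) (Finset.mem_univ w)
    linarith
  have hPsi : ∀ τ, GCS.Psi G δ O (s : ℝ) L v τ = f τ := by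
    intro τ
    apply le_antisymm
    · exact csSup_le ⟨_, v, Walk.nil, rfl⟩ (hub τ)
    · obtain ⟨w, -, hw⟩ := Finset.exists_mem_eq_sup' Finset.univ_nonempty
        (fun w => L w τ - L v τ - m w)
      obtain ⟨p, hp⟩ := hm_ex w
      have hw' : f τ = L w τ - L v τ - m w := hw
      rw [hw']
      exact le_csSup ⟨f τ, hub τ⟩ ⟨w, p, by rw [hp]⟩
  -- slow condition at maximizers
  have hslow : ∀ (x : ℝ) (w : V), w ≠ v → L w x - L v x - m w = f x →
      GCS.SlowCondAt G δ O L w x s := by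
    intro x w hwv hact
    have hle : ∀ u : V, L u x - L v x - m u ≤ L w x - L v x - m w := by
      intro u
      rw [hact]
      exact Finset.le_sup' (fun w => L w x - L v x - m w) (Finset.mem_univ u)
    constructor
    · obtain ⟨p, hp⟩ := hm_ex w
      have hpn : ¬ p.Nil := Walk.not_nil_of_ne hwv.symm
      obtain ⟨c, q, hadj, hpc⟩ := GCS.exists_concat_of_not_nil p hpn
      refine ⟨c, hadj.symm, ?_⟩
      have h1 : m c ≤ GCS.walkWt δ O (s : ℝ) q := hm_le c q
      have h2 : m w = GCS.walkWt δ O (s : ℝ) q + GCS.edgeWt δ O (s : ℝ) c w := by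
        rw [← hp, hpc, GCS.walkWt_concat]
      have h3 := hle c
      have hδ : 4 * (s:ℝ) * δ w c = 4 * (s:ℝ) * δ c w := by rw [hδsym w c hadj.symm]
      have hO := hOanti w c hadj.symm
      simp only [GCS.edgeWt] at h2
      linarith
    · intro u hadj
      obtain ⟨p, hp⟩ := hm_ex w
      have h1 : m u ≤ m w + GCS.edgeWt δ O (s : ℝ) w u := by
        have := hm_le u (p.concat hadj)
        rwa [GCS.walkWt_concat, hp] at this
      have h3 := hle u
      simp only [GCS.edgeWt] at h1
      linarith
  -- derivative bound at maximizers
  have hderiv_bound : ∀ (x : ℝ) (w : V), L w x - L v x - m w = f x →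
      deriv (L w) x - deriv (L v) x ≤ ϑ - 1 := by
    intro x w hact
    by_cases hwv : w = v
    · subst hwv; simp; linarith
    · have h1 := (hadm w x).1 ⟨s, hslow x w hwv hact⟩
      have h2 := hlo v x
      linarith
  -- continuity
  have hLc : ∀ w : V, Continuous (L w) := fun w => (hdiff w).continuous
  have hgc : ∀ w : V, Continuous fun τ => L w τ - L v τ - m w := fun w =>
    (((hLc w).sub (hLc v)).sub continuous_const)
  have hfc : Continuous f := GCS.continuous_finset_sup'_fun Finset.univ_nonempty hgc
  -- the fencing theorem
  have key : ∀ ⦃x⦄, x ∈ Set.Icc t t' → f x ≤ f t + (ϑ - 1) * (x - t) := by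
    apply image_le_of_liminf_slope_right_le_deriv_boundary (B' := fun _ => ϑ - 1)
        hfc.continuousOn (by simp)
    · exact (continuous_const.add (continuous_const.mul
        (continuous_id.sub continuous_const))).continuousOn
    · intro x _
      have : HasDerivAt (fun τ => f t + (ϑ - 1) * (τ - t)) (ϑ - 1) x := by
        simpa using (((hasDerivAt_id x).sub_const t).const_mul (ϑ - 1)).const_add (f t)
      exact this.hasDerivWithinAt
    · intro x _ r hr
      set A : Finset V := Finset.univ.filter (fun w => L w x - L v x - m w = f x) with hA
      have hAne : A.Nonempty := by
        obtain ⟨w, -, hw⟩ := Finset.exists_mem_eq_sup' Finset.univ_nonempty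
          (fun w => L w x - L v x - m w)
        have hw' : L w x - L v x - m w = f x := hw.symm
        exact ⟨w, Finset.mem_filter.2 ⟨Finset.mem_univ w, hw'⟩⟩
      set h : ℝ → ℝ := fun z => A.sup' hAne (fun w => L w z - L v z - m w) with hhdef
      have hhx : h x = f x := by
        apply le_antisymm
        · exact Finset.sup'_le _ _ fun w hw => le_of_eq ((Finset.mem_filter.1 hw).2)
        · obtain ⟨w, hw⟩ := hAne
          rw [← (Finset.mem_filter.1 hw).2]
          exact Finset.le_sup' (fun w => L w x - L v x - m w) hw
      have hhc : Continuous h := GCS.continuous_finset_sup'_fun hAne hgc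
      -- E1 : active slopes eventually below r
      have E1 : ∀ᶠ z in nhdsWithin x (Set.Ioi x), ∀ w ∈ A,
          slope (fun τ => L w τ - L v τ - m w) x z < r := by
        rw [Filter.eventually_all_finset]
        intro w hw
        have hd : HasDerivAt (fun τ => L w τ - L v τ - m w)
            (deriv (L w) x - deriv (L v) x) x :=
          (((hdiff w x).hasDerivAt.sub (hdiff v x).hasDerivAt).sub_const _)
        have hlt : deriv (L w) x - deriv (L v) x < r :=
          lt_of_le_of_lt (hderiv_bound x w (Finset.mem_filter.1 hw).2) hr
        have := (hasDerivAt_iff_tendsto_slope.1 hd).eventually_lt_const hlt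
        exact this.filter_mono (nhdsWithin_mono x fun z hz => ne_of_gt hz)
      -- E2 : inactive functions eventually below h
      have E2 : ∀ᶠ z in nhdsWithin x (Set.Ioi x), ∀ w ∈ Finset.univ \ A,
          L w z - L v z - m w < h z := by
        rw [Filter.eventually_all_finset]
        intro w hw
        have hne : L w x - L v x - m w < f x := by
          rcases lt_or_eq_of_le (Finset.le_sup' (fun w => L w x - L v x - m w)
            (Finset.mem_univ w)) with hlt | heq
          · exact hlt
          · have hw' : L w x - L v x - m w = f x := heq
            exact absurd (Finset.mem_filter.2 ⟨Finset.mem_univ w, hw'⟩) (Finset.mem_sdiff.1 hw).2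
        have htd : Filter.Tendsto (fun z => (L w z - L v z - m w) - h z) (nhds x)
            (nhds ((L w x - L v x - m w) - h x)) :=
          ((hgc w).sub hhc).tendsto x
        have hlt0 : (L w x - L v x - m w) - h x < 0 := by rw [hhx]; linarith
        have := (htd.eventually_lt_const hlt0).filter_mono
          (nhdsWithin_le_nhds (s := Set.Ioi x))
        filter_upwards [this] with z hz
        linarith
      refine ((E1.and E2).frequently).mono ?_
      rintro z ⟨hz1, hz2⟩
      obtain ⟨u, hu, hfu⟩ := Finset.exists_mem_eq_sup' Finset.univ_nonempty
        (fun w => L w z - L v z - m w)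
      have huA : u ∈ A := by
        by_contra huA
        have h1 := hz2 u (Finset.mem_sdiff.2 ⟨Finset.mem_univ u, huA⟩)
        have h2 : h z ≤ f z := Finset.sup'_le _ _ fun w hw =>
          Finset.le_sup' (fun w => L w z - L v z - m w) (Finset.mem_univ w)
        have hfz : f z = L u z - L v z - m u := hfu
        linarith
      have hux : L u x - L v x - m u = f x := (Finset.mem_filter.1 huA).2
      have hfz : f z = L u z - L v z - m u := hfu
      have hfx : f x = L u x - L v x - m u := hux.symm
      have : slope f x z = slope (fun τ => L u τ - L v τ - m u) x z := by
        simp only [slope_def_field, hfz, hfx]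
      rw [this]
      exact hz1 u huA
  have := key (Set.mem_Icc.2 ⟨le_of_lt htt', le_refl t'⟩)
  rw [hPsi t, hPsi t']
  exact this
end

section
/- In the external-synchronization setting: let s ∈ ℕ be such that every directed cycle of H has nonnegative ω^s-weight, and let a be a time. Then for every time t ≥ a + Ψ^s(a)/(ζ−ϑ), the potential of the virtual node vanishes: Ψ_{v₀}^s(t) = 0. -/
open SimpleGraph

section Aux
open SimpleGraph

namespace GCSAux

variable {V : Type*} [DecidableEq V] {G : SimpleGraph V} {δ O : V → V → ℝ} {s : ℝ}

@[simp] lemma walkWt_nil {v : V} : GCS.walkWt δ O s (Walk.nil : G.Walk v v) = 0 := rfl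

@[simp] lemma walkWt_cons {v w u : V} (h : G.Adj v w) (p : G.Walk w u) :
    GCS.walkWt δ O s (Walk.cons h p) = GCS.edgeWt δ O s v w + GCS.walkWt δ O s p := by
  simp [GCS.walkWt, Walk.darts_cons]

@[simp] lemma walkWt_append {v w u : V} (p : G.Walk v w) (q : G.Walk w u) :
    GCS.walkWt δ O s (p.append q) = GCS.walkWt δ O s p + GCS.walkWt δ O s q := by
  simp [GCS.walkWt, Walk.darts_append]

@[simp] lemma walkWt_concat {v w u : V} (p : G.Walk v w) (h : G.Adj w u) :
    GCS.walkWt δ O s (p.concat h) = GCS.walkWt δ O s p + GCS.edgeWt δ O s w u := by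
  simp [Walk.concat_eq_append]

lemma two_cycle_nonneg (hδ : ∀ v w, G.Adj v w → 0 ≤ δ v w)
    (hO : ∀ v w, G.Adj v w → O v w = -O w v) (hs : 0 ≤ s)
    {v u : V} (h : G.Adj v u) :
    0 ≤ GCS.edgeWt δ O s v u + GCS.edgeWt δ O s u v := by
  have h1 := hδ v u h
  have h2 := hδ u v h.symm
  have h3 := hO v u h
  unfold GCS.edgeWt
  nlinarith [mul_nonneg (by positivity : (0:ℝ) ≤ 4 * s) h1,
    mul_nonneg (by positivity : (0:ℝ) ≤ 4 * s) h2]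

/-- a closed walk at `v` with nodup support tail except... : support nodup closed walk is nil -/
lemma closed_nodup_nil {v : V} (q : G.Walk v v) (hq : q.support.Nodup) : q = Walk.nil := by
  cases q with
  | nil => rfl
  | cons h q' =>
    exfalso
    rw [Walk.support_cons, List.nodup_cons] at hq
    exact hq.1 (Walk.end_mem_support q')

lemma main_induction (hnc : GCS.NonnegCycles G δ O s)
    (hδ : ∀ v w, G.Adj v w → 0 ≤ δ v w)
    (hO : ∀ v w, G.Adj v w → O v w = -O w v) (hs : 0 ≤ s) :
    ∀ n : ℕ,
      (∀ (v : V) (c : G.Walk v v), c.length ≤ n → 0 ≤ GCS.walkWt δ O s c) ∧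
      (∀ (v w : V) (p : G.Walk v w), p.length ≤ n → ¬p.IsPath →
        ∃ q : G.Walk v w, q.IsPath ∧ q.length < p.length ∧
          GCS.walkWt δ O s q ≤ GCS.walkWt δ O s p) := by
  intro n
  induction n using Nat.strong_induction_on with
  | _ n IH =>
  have hP : ∀ (v : V) (c : G.Walk v v), c.length ≤ n → 0 ≤ GCS.walkWt δ O s c := by
    intro v c hlen
    cases c with
    | nil => simp
    | @cons _ u' _ h p =>
      rw [Walk.length_cons] at hlen
      by_cases hp : p.IsPath
      · by_cases he : s(v, u') ∈ p.edges
        · -- p must be the single edge u'-v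
          rw [Walk.edges, List.mem_map] at he
          obtain ⟨d, hd, hde⟩ := he
          have hde' : (d.toProd.1 = v ∧ d.toProd.2 = u') ∨
              (d.toProd.1 = u' ∧ d.toProd.2 = v) := by
            rw [Dart.edge] at hde
            exact Sym2.eq_iff.mp hde
          rcases hde' with ⟨h1, h2⟩ | ⟨h1, h2⟩
          · exfalso
            have hv : v ∈ p.support.dropLast := by
              rw [← Walk.map_fst_darts]
              exact List.mem_map.mpr ⟨d, hd, h1⟩
            have hnd : p.support.Nodup := hp.support_nodup
            have hsp : p.support.dropLast ++ [v] = p.support := by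
              have := Walk.getLast_support p
              conv_rhs => rw [← List.dropLast_append_getLast (Walk.support_ne_nil p)]
              rw [this]
            rw [← hsp, List.nodup_append] at hnd
            exact hnd.2.2 v hv v (by simp) rfl
          · -- dart (u', v) ∈ p.darts
            cases p with
            | nil => simp at hd
            | @cons _ x _ h₂ q =>
              rw [Walk.darts_cons, List.mem_cons] at hd
              have hnd : (Walk.cons h₂ q).support.Nodup := hp.support_nodup
              rw [Walk.support_cons, List.nodup_cons] at hnd
              rcases hd with hd | hd
              · have hx : x = v := by
                  have := congrArg Prod.snd (congrArg Dart.toProd hd)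
                  simp at this
                  rw [← this, h2]
                subst hx
                have hqn := closed_nodup_nil q hnd.2
                subst hqn
                simp only [walkWt_cons, walkWt_nil, add_zero]
                exact two_cycle_nonneg hδ hO hs h
              · exfalso
                have : u' ∈ q.support.dropLast := by
                  rw [← Walk.map_fst_darts]
                  exact List.mem_map.mpr ⟨d, hd, h1⟩
                exact hnd.1 (List.dropLast_subset _ this)
        · have hcyc : (Walk.cons h p).IsCycle := (Walk.cons_isCycle_iff p h).2 ⟨hp, he⟩
          exact hnc v _ hcyc
      · -- p not a path
        have hlt : p.length < n := by omega
        obtain ⟨q, hq, hql, hqw⟩ := (IH p.length hlt).2 _ _ p le_rfl hp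
        have h0 : 0 ≤ GCS.walkWt δ O s (Walk.cons h q) :=
          (IH (q.length + 1) (by omega)).1 v (Walk.cons h q) (by simp)
        rw [walkWt_cons] at h0 ⊢
        linarith
  refine ⟨hP, ?_⟩
  intro v w p hlen hnp
  have hnodup : ¬p.support.Nodup := fun h => hnp ((Walk.isPath_def p).mpr h)
  obtain ⟨u, hu⟩ := List.exists_duplicate_iff_not_nodup.mpr hnodup
  have hcount : 2 ≤ p.support.count u := List.duplicate_iff_two_le_count.mp hu
  have humem : u ∈ p.support := hu.mem
  set t₁ := p.takeUntil u humem with ht₁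
  set d := p.dropUntil u humem with hd
  have hspec : t₁.append d = p := Walk.take_spec p humem
  have hc1 : t₁.support.count u = 1 := Walk.count_support_takeUntil_eq_one p humem
  have hsupp : p.support = t₁.support ++ d.support.tail := by
    rw [← hspec, Walk.support_append]
  have hmem : u ∈ d.support.tail := by
    by_contra hcon
    rw [hsupp, List.count_append, hc1] at hcount
    have : d.support.tail.count u = 0 := List.count_eq_zero_of_not_mem hcon
    omega
  cases hdc : d with
  | nil => rw [hdc] at hmem; simp at hmem
  | @cons _ x _ h₂ e =>
    have hmem' : u ∈ e.support := by
      rw [hdc] at hmem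
      simpa using hmem
    set t₂ := e.takeUntil u hmem' with ht₂
    set e' := e.dropUntil u hmem' with he'
    have hspec2 : t₂.append e' = e := Walk.take_spec e hmem'
    set r := t₁.append e' with hr
    have hwt : GCS.walkWt δ O s p =
        GCS.walkWt δ O s r + (GCS.edgeWt δ O s u x + GCS.walkWt δ O s t₂) := by
      rw [← hspec, hdc, ← hspec2]
      simp [hr]
      ring
    have hlenp : p.length = t₁.length + (1 + (t₂.length + e'.length)) := by
      conv_lhs => rw [← hspec, hdc, ← hspec2]
      simp [Walk.length_append, Walk.length_cons]
      ring
    have hc0 : 0 ≤ GCS.edgeWt δ O s u x + GCS.walkWt δ O s t₂ := by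
      have := hP u (Walk.cons h₂ t₂) (by rw [Walk.length_cons]; omega)
      rwa [walkWt_cons] at this
    have hrw : GCS.walkWt δ O s r ≤ GCS.walkWt δ O s p := by linarith
    have hrl : r.length < p.length := by
      rw [hr, Walk.length_append]; omega
    by_cases hrp : r.IsPath
    · exact ⟨r, hrp, hrl, hrw⟩
    · obtain ⟨q, hq, hql, hqw⟩ := (IH r.length (by omega)).2 _ _ r le_rfl hrp
      exact ⟨q, hq, by omega, le_trans hqw hrw⟩

lemma exists_path_wt_le (hnc : GCS.NonnegCycles G δ O s)
    (hδ : ∀ v w, G.Adj v w → 0 ≤ δ v w)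
    (hO : ∀ v w, G.Adj v w → O v w = -O w v) (hs : 0 ≤ s)
    {v w : V} (p : G.Walk v w) :
    ∃ q : G.Walk v w, q.IsPath ∧ GCS.walkWt δ O s q ≤ GCS.walkWt δ O s p := by
  by_cases hp : p.IsPath
  · exact ⟨p, hp, le_rfl⟩
  · obtain ⟨q, hq, _, hqw⟩ := (main_induction hnc hδ hO hs p.length).2 _ _ p le_rfl hp
    exact ⟨q, hq, hqw⟩

lemma closed_wt_nonneg (hnc : GCS.NonnegCycles G δ O s)
    (hδ : ∀ v w, G.Adj v w → 0 ≤ δ v w)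
    (hO : ∀ v w, G.Adj v w → O v w = -O w v) (hs : 0 ≤ s)
    {v : V} (c : G.Walk v v) : 0 ≤ GCS.walkWt δ O s c :=
  (main_induction hnc hδ hO hs c.length).1 v c le_rfl

end GCSAux
end Aux
section Aux2
open SimpleGraph

namespace GCSAux

variable {V : Type*} [Fintype V] [DecidableEq V] {G : SimpleGraph V} {δ O : V → V → ℝ} {s : ℝ}

lemma finite_paths (v w : V) : Finite {q : G.Walk v w // q.IsPath} := by
  classical
  refine Finite.of_injective
    (fun q : {q : G.Walk v w // q.IsPath} =>
      (⟨q.1, q.2, q.2.length_lt⟩ : {q : G.Walk v w // q.IsPath ∧ q.length < Fintype.card V}))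
    ?_
  intro a b hab
  rw [Subtype.mk.injEq] at hab
  exact Subtype.ext hab

variable (hnc : GCS.NonnegCycles G δ O s)
  (hδ : ∀ v w, G.Adj v w → 0 ≤ δ v w)
  (hO : ∀ v w, G.Adj v w → O v w = -O w v) (hs : 0 ≤ s)
  (hconn : G.Connected)

include hnc hδ hO hs hconn

lemma dS_le_and_attained (v w : V) :
    (∀ p : G.Walk v w, GCS.dS G δ O s v w ≤ GCS.walkWt δ O s p) ∧
    (∃ p : G.Walk v w, p.IsPath ∧ GCS.walkWt δ O s p = GCS.dS G δ O s v w) := by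
  set S := {x : ℝ | ∃ p : G.Walk v w, GCS.walkWt δ O s p = x} with hS
  set T := (Set.range fun q : {q : G.Walk v w // q.IsPath} => GCS.walkWt δ O s q.1) with hT
  have hTfin : T.Finite := @Set.finite_range _ _ _ (finite_paths v w)
  have hTS : T ⊆ S := by rintro x ⟨q, rfl⟩; exact ⟨q.1, rfl⟩
  have hSne : S.Nonempty := by
    obtain ⟨p⟩ := hconn.preconnected v w
    exact ⟨_, p, rfl⟩
  have hTne : T.Nonempty := by
    obtain ⟨x, p, _⟩ := hSne
    obtain ⟨q, hq, _⟩ := exists_path_wt_le hnc hδ hO hs p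
    exact ⟨_, ⟨q, hq⟩, rfl⟩
  have hlb : ∀ x ∈ S, sInf T ≤ x := by
    rintro x ⟨p, rfl⟩
    obtain ⟨q, hq, hle⟩ := exists_path_wt_le hnc hδ hO hs p
    exact le_trans (csInf_le (hTfin.bddBelow) ⟨⟨q, hq⟩, rfl⟩) hle
  have hmemT : sInf T ∈ T := hTne.csInf_mem hTfin
  have heq : GCS.dS G δ O s v w = sInf T := by
    rw [GCS.dS]
    refine le_antisymm (csInf_le ⟨sInf T, hlb⟩ (hTS hmemT)) (le_csInf hSne hlb)
  constructor
  · intro p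
    rw [heq]
    exact hlb _ ⟨p, rfl⟩
  · obtain ⟨q, hq⟩ := hmemT
    exact ⟨q.1, q.2, by rw [heq]; exact hq⟩

lemma dS_self (v : V) : GCS.dS G δ O s v v = 0 := by
  have h := dS_le_and_attained hnc hδ hO hs hconn v v
  refine le_antisymm (by simpa using h.1 Walk.nil) ?_
  obtain ⟨p, _, hp⟩ := h.2
  rw [← hp]
  exact closed_wt_nonneg hnc hδ hO hs p

lemma dS_triangle {v w u : V} (h : G.Adj w u) :
    GCS.dS G δ O s v u ≤ GCS.dS G δ O s v w + GCS.edgeWt δ O s w u := by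
  obtain ⟨p, _, hp⟩ := (dS_le_and_attained hnc hδ hO hs hconn v w).2
  have := (dS_le_and_attained hnc hδ hO hs hconn v u).1 (p.concat h)
  rw [walkWt_concat, hp] at this
  exact this

lemma dS_pred {v w : V} (hvw : w ≠ v) :
    ∃ u, G.Adj u w ∧ GCS.dS G δ O s v u + GCS.edgeWt δ O s u w ≤ GCS.dS G δ O s v w := by
  obtain ⟨p, _, hp⟩ := (dS_le_and_attained hnc hδ hO hs hconn v w).2
  cases p with
  | nil => exact absurd rfl hvw
  | @cons _ x _ h₂ q =>
    obtain ⟨y, q', h', hcat⟩ := Walk.exists_cons_eq_concat h₂ q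
    refine ⟨y, h', ?_⟩
    rw [hcat, walkWt_concat] at hp
    have := (dS_le_and_attained hnc hδ hO hs hconn v y).1 q'
    linarith

end GCSAux
end Aux2
section Aux3
open SimpleGraph

namespace GCSAux

variable {V : Type*} [Fintype V] [DecidableEq V] [Nonempty V]
  {G : SimpleGraph V} {δ O : V → V → ℝ} {s : ℝ}

variable (hnc : GCS.NonnegCycles G δ O s)
  (hδ : ∀ v w, G.Adj v w → 0 ≤ δ v w)
  (hO : ∀ v w, G.Adj v w → O v w = -O w v) (hs : 0 ≤ s)
  (hconn : G.Connected)

include hnc hδ hO hs hconn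

lemma Psi_eq_sup' (L : V → ℝ → ℝ) (v : V) (t : ℝ) :
    GCS.Psi G δ O s L v t =
      Finset.univ.sup' Finset.univ_nonempty
        (fun w => L w t - L v t - GCS.dS G δ O s v w) := by
  set S := {x : ℝ | ∃ w : V, ∃ p : G.Walk v w, x = L w t - L v t - GCS.walkWt δ O s p} with hSdef
  have hSne : S.Nonempty := ⟨_, v, Walk.nil, rfl⟩
  have hub : ∀ x ∈ S, x ≤ Finset.univ.sup' Finset.univ_nonempty
      (fun w => L w t - L v t - GCS.dS G δ O s v w) := by
    rintro x ⟨w, p, rfl⟩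
    have h1 := (dS_le_and_attained hnc hδ hO hs hconn v w).1 p
    refine le_trans ?_ (Finset.le_sup' _ (Finset.mem_univ w))
    linarith
  refine le_antisymm (csSup_le hSne hub) (Finset.sup'_le _ _ ?_)
  intro w _
  obtain ⟨p, _, hp⟩ := (dS_le_and_attained hnc hδ hO hs hconn v w).2
  exact le_csSup ⟨_, hub⟩ ⟨w, p, by rw [hp]⟩

lemma Psi_nonneg (L : V → ℝ → ℝ) (v : V) (t : ℝ) : 0 ≤ GCS.Psi G δ O s L v t := by
  rw [Psi_eq_sup' hnc hδ hO hs hconn]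
  have h1 := Finset.le_sup' (fun w => L w t - L v t - GCS.dS G δ O s v w) (Finset.mem_univ v)
  have h0 : L v t - L v t - GCS.dS G δ O s v v = 0 := by
    rw [dS_self hnc hδ hO hs hconn]; ring
  rw [h0] at h1
  exact h1

end GCSAux
end Aux3

/-- external synchronization: for all times
`t ≥ a + Ψ^s(a)/(ζ-ϑ)`, the potential of the virtual node vanishes: `Ψ_{v₀}^s(t) = 0`. -/
theorem virtual_node_potential_vanishes
    {V' : Type*} [Fintype V'] [DecidableEq V'] [Nonempty V']
    (v₀ : V') (H : SimpleGraph V') (hconn : H.Connected)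
    (δ O : V' → V' → ℝ)
    (hδpos : ∀ v w, H.Adj v w → 0 < δ v w)
    (hδsym : ∀ v w, H.Adj v w → δ v w = δ w v)
    (hOanti : ∀ v w, H.Adj v w → O v w = -O w v)
    (L : V' → ℝ → ℝ) (ϑ μ ζ : ℝ)
    (hϑ : 1 < ϑ) (hμ : 0 < μ) (hζϑ : ϑ < ζ) (hζμ : ζ < 1 + μ)
    (hdiff : ∀ v, Differentiable ℝ (L v))
    (hv₀ : ∀ t : ℝ, deriv (L v₀) t = ζ)
    (hlo : ∀ v : V', v ≠ v₀ → ∀ t : ℝ, 1 ≤ deriv (L v) t)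
    (hhi : ∀ v : V', v ≠ v₀ → ∀ t : ℝ, deriv (L v) t ≤ ϑ * (1 + μ))
    (hslow : ∀ v : V', v ≠ v₀ → ∀ t : ℝ,
      (∃ s : ℕ, GCS.SlowCondAt H δ O L v t s) → deriv (L v) t ≤ ϑ)
    (hfast : ∀ v : V', v ≠ v₀ → ∀ t : ℝ,
      (∃ s : ℕ, GCS.FastCondAt H δ O L v t s) → 1 + μ ≤ deriv (L v) t)
    (s : ℕ) (hnc : GCS.NonnegCycles H δ O (s : ℝ))
    (a : ℝ) :
    ∀ t : ℝ, a + GCS.PsiAll H δ O (s : ℝ) L a / (ζ - ϑ) ≤ t →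
      GCS.Psi H δ O (s : ℝ) L v₀ t = 0 := by
  have hδ0 : ∀ v w, H.Adj v w → 0 ≤ δ v w := fun v w h => (hδpos v w h).le
  have hs0 : (0:ℝ) ≤ (s:ℝ) := Nat.cast_nonneg s
  set c : ℝ := ζ - ϑ with hc
  have hcpos : 0 < c := sub_pos.2 hζϑ
  set D : V' → ℝ := fun w => GCS.dS H δ O (s:ℝ) v₀ w with hD
  set g : V' → ℝ → ℝ := fun w x => L w x - L v₀ x - D w with hg
  set F : ℝ → ℝ := fun x =>
    Finset.univ.sup' Finset.univ_nonempty (fun w => g w x) with hF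
  have hPsiEq : ∀ x, GCS.Psi H δ O (s:ℝ) L v₀ x = F x := fun x =>
    GCSAux.Psi_eq_sup' hnc hδ0 hOanti hs0 hconn L v₀ x
  -- derivative of g w
  have hgder : ∀ (w : V') (x : ℝ), HasDerivAt (g w) (deriv (L w) x - ζ) x := by
    intro w x
    have h1 : HasDerivAt (L w) (deriv (L w) x) x := (hdiff w x).hasDerivAt
    have h2 : HasDerivAt (L v₀) ζ x := hv₀ x ▸ (hdiff v₀ x).hasDerivAt
    exact (h1.sub h2).sub_const (D w)
  have hgcont : ∀ w : V', Continuous (g w) := fun w =>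
    (((hdiff w).continuous.sub (hdiff v₀).continuous).sub continuous_const)
  have hFcont : Continuous F := by
    rw [hF]
    exact Continuous.finset_sup'_apply Finset.univ_nonempty fun w _ => hgcont w
  -- the active set and upper derivative bound function
  classical
  have hAne : ∀ x : ℝ, (Finset.univ.filter (fun w => g w x = F x)).Nonempty := by
    intro x
    obtain ⟨w, _, hweq⟩ := Finset.exists_mem_eq_sup' Finset.univ_nonempty (fun w => g w x)
    exact ⟨w, Finset.mem_filter.2 ⟨Finset.mem_univ w, hweq.symm⟩⟩
  set f' : ℝ → ℝ := fun x =>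
    (Finset.univ.filter (fun w => g w x = F x)).sup' (hAne x)
      (fun w => deriv (L w) x - ζ) with hf'def
  -- the liminf slope condition
  have hf' : ∀ (x r : ℝ), f' x < r → ∃ᶠ z in nhdsWithin x (Set.Ioi x),
      slope F x z < r := by
    intro x r hr
    by_contra hcon
    rw [Filter.not_frequently] at hcon
    have hex : ∃ w : V', ∃ᶠ z in nhdsWithin x (Set.Ioi x),
        g w z = F z ∧ ¬slope F x z < r := by
      by_contra hne2
      push_neg at hne2
      have hall : ∀ᶠ z in nhdsWithin x (Set.Ioi x),
          ∀ w : V', ¬(g w z = F z ∧ ¬slope F x z < r) := by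
        rw [Filter.eventually_all]
        intro w
        have h6 := hne2 w
        exact h6.mono fun z hz hcontra => hcontra.2 (hz hcontra.1)
      obtain ⟨z, hz1, hz2⟩ := (hall.and hcon).exists
      obtain ⟨w, _, hweq⟩ := Finset.exists_mem_eq_sup' Finset.univ_nonempty (fun w => g w z)
      exact hz1 w ⟨hweq.symm, hz2⟩
    obtain ⟨w, hfreq⟩ := hex
    have hwx : g w x = F x := by
      have hclosed : IsClosed {z : ℝ | g w z = F z} := isClosed_eq (hgcont w) hFcont
      have hxcl : x ∈ closure {z : ℝ | g w z = F z} :=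
        mem_closure_iff_frequently.mpr
          ((hfreq.mono fun z hz => hz.1).filter_mono nhdsWithin_le_nhds)
      rwa [hclosed.closure_eq] at hxcl
    have hwA : w ∈ Finset.univ.filter (fun w => g w x = F x) :=
      Finset.mem_filter.2 ⟨Finset.mem_univ w, hwx⟩
    have hdle : deriv (L w) x - ζ ≤ f' x := by
      rw [hf'def]
      exact Finset.le_sup' (fun w => deriv (L w) x - ζ) hwA
    have hslope : ∀ᶠ z in nhdsWithin x {x}ᶜ, slope (g w) x z < r := by
      have ht := hasDerivAt_iff_tendsto_slope.mp (hgder w x)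
      have : Set.Iio r ∈ nhds (deriv (L w) x - ζ) :=
        Iio_mem_nhds (lt_of_le_of_lt hdle hr)
      exact ht this
    have hslope' : ∀ᶠ z in nhdsWithin x (Set.Ioi x), slope (g w) x z < r :=
      hslope.filter_mono (nhdsWithin_mono x fun z hz => ne_of_gt hz)
    obtain ⟨z, ⟨hz1, hz3⟩, hz2⟩ := (hfreq.and_eventually hslope').exists
    apply hz3
    have heq : slope F x z = slope (g w) x z := by
      rw [slope_def_field, slope_def_field, hz1, hwx]
    rw [heq]
    exact hz2
  -- maximizers are slow when F > 0
  have hkey : ∀ x : ℝ, 0 < F x → f' x ≤ -c := by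
    intro x hFx
    rw [hf'def]
    apply Finset.sup'_le
    intro w hw
    rw [Finset.mem_filter] at hw
    have hgwx : g w x = F x := hw.2
    have hg0 : g v₀ x = 0 := by
      simp only [hg, hD]
      rw [GCSAux.dS_self hnc hδ0 hOanti hs0 hconn]
      ring
    have hwv : w ≠ v₀ := by
      intro hwe
      rw [hwe, hg0] at hgwx
      exact absurd hgwx.symm (ne_of_gt hFx)
    have hmax : ∀ u : V', g u x ≤ g w x := by
      intro u
      rw [hgwx]
      exact Finset.le_sup' (fun w => g w x) (Finset.mem_univ u)
    have hslow' : GCS.SlowCondAt H δ O L w x s := by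
      constructor
      · obtain ⟨u, hadj, htri⟩ := GCSAux.dS_pred hnc hδ0 hOanti hs0 hconn (v := v₀) hwv
        refine ⟨u, hadj.symm, ?_⟩
        have h1 := hmax u
        have hδs := hδsym u w hadj
        have hOs := hOanti w u hadj.symm
        simp only [hg] at h1
        simp only [GCS.edgeWt] at htri
        rw [← hδs, hOs]
        linarith
      · intro u hadj
        have h1 := hmax u
        have htri := GCSAux.dS_triangle hnc hδ0 hOanti hs0 hconn (v := v₀) hadj
        simp only [GCS.edgeWt] at htri
        simp only [hg] at h1
        linarith
    have hϑb := hslow w hwv x ⟨s, hslow'⟩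
    rw [hc]
    linarith
  -- F is nonnegative
  have hF0 : ∀ x : ℝ, 0 ≤ F x := by
    intro x
    have h1 : 0 ≤ GCS.Psi H δ O (s:ℝ) L v₀ x :=
      GCSAux.Psi_nonneg hnc hδ0 hOanti hs0 hconn L v₀ x
    rwa [hPsiEq x] at h1
  intro t ht
  have hPsiAll0 : 0 ≤ GCS.PsiAll H δ O (s:ℝ) L a :=
    Real.iSup_nonneg fun v => GCSAux.Psi_nonneg hnc hδ0 hOanti hs0 hconn L v a
  have hat : a ≤ t := le_trans (le_add_of_nonneg_right (div_nonneg hPsiAll0 hcpos.le)) ht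
  have hFaPsi : F a ≤ GCS.PsiAll H δ O (s:ℝ) L a := by
    rw [← hPsiEq a]
    unfold GCS.PsiAll
    exact le_ciSup (f := fun v => GCS.Psi H δ O (s:ℝ) L v a)
      (Set.Finite.bddAbove (Set.finite_range _)) v₀
  have hcta : F a ≤ c * (t - a) := by
    have h2 : GCS.PsiAll H δ O (s:ℝ) L a / c ≤ t - a := by linarith
    calc F a ≤ GCS.PsiAll H δ O (s:ℝ) L a := hFaPsi
    _ = c * (GCS.PsiAll H δ O (s:ℝ) L a / c) := by field_simp
    _ ≤ c * (t - a) := by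
        exact mul_le_mul_of_nonneg_left h2 hcpos.le
  -- Step 1: there exists τ ∈ [a,t] with F τ = 0
  have hstep1 : ∃ τ ∈ Set.Icc a t, F τ = 0 := by
    by_contra hcon
    push_neg at hcon
    have hpos : ∀ τ ∈ Set.Icc a t, 0 < F τ := fun τ hτ =>
      lt_of_le_of_ne (hF0 τ) (fun h => hcon τ hτ h.symm)
    have key : ∀ ε : ℝ, 0 < ε → F t ≤ F a - (c - ε) * (t - a) := by
      intro ε hε
      have hB : ∀ x : ℝ, HasDerivAt (fun y => F a - (c - ε) * (y - a)) (-(c - ε)) x := by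
        intro x
        have h1 : HasDerivAt (fun y : ℝ => (c - ε) * (y - a)) ((c - ε) * 1) x :=
          ((hasDerivAt_id x).sub_const a).const_mul (c - ε)
        have h2 := (hasDerivAt_const x (F a)).sub h1
        exact h2.congr_deriv (by ring)
      have := image_le_of_liminf_slope_right_lt_deriv_boundary
        (f := F) (f' := f') (a := a) (b := t)
        (B := fun y => F a - (c - ε) * (y - a)) (B' := fun _ => -(c - ε))
        hFcont.continuousOn
        (fun x _ r hr => hf' x r hr)
        (by simp)
        hB
        (fun x hx _ => by
          have h3 := hkey x (hpos x ⟨hx.1, hx.2.le⟩)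
          show f' x < -(c - ε)
          linarith)
      exact this ⟨hat, le_rfl⟩
    have hFt : F t ≤ F a - c * (t - a) := by
      by_contra hcon2
      push_neg at hcon2
      set ε : ℝ := (F t - (F a - c * (t - a))) / (t - a) with hεdef
      rcases eq_or_lt_of_le hat with heq | hlt
      · have hteq : t = a := heq.symm
        rw [hteq] at hcon2
        simp at hcon2
      · have htane : 0 < t - a := by linarith
        have hεpos : 0 < ε := div_pos (by linarith) htane
        have h4 := key (ε / 2) (by linarith)
        have h5 : ε * (t - a) = F t - (F a - c * (t - a)) := by
          rw [hεdef]; field_simp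
        nlinarith
    have := hpos t ⟨hat, le_rfl⟩
    linarith
  obtain ⟨τ, hτ, hFτ⟩ := hstep1
  -- Step 2: F t ≤ ε for every ε > 0
  have hstep2 : ∀ ε : ℝ, 0 < ε → F t ≤ ε := by
    intro ε hε
    have := image_le_of_liminf_slope_right_lt_deriv_boundary
      (f := F) (f' := f') (a := τ) (b := t)
      (B := fun _ => ε) (B' := fun _ => 0)
      hFcont.continuousOn
      (fun x _ r hr => hf' x r hr)
      (by rw [hFτ]; exact hε.le)
      (fun x => hasDerivAt_const x ε)
      (fun x hx hcontact => by
        have hcx : F x = ε := hcontact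
        have h3 := hkey x (by rw [hcx]; exact hε)
        show f' x < 0
        linarith)
    exact this ⟨hτ.2, le_rfl⟩
  have hFt0 : F t ≤ 0 := by
    by_contra hcon
    push_neg at hcon
    have := hstep2 (F t / 2) (by linarith)
    linarith
  rw [hPsiEq t]
  exact le_antisymm hFt0 (hF0 t)
end

section
/- In the external-synchronization setting: let s ∈ ℕ, s ≥ 1, be such that every directed cycle of H has nonnegative ω^{s−1/2}-weight, let v ∈ V', and let t < t' be times with Ψ_{v₀}^{s−1/2}(t) = 0. Then L_v(t') − L_v(t) ≥ (t'−t) + min{ Ψ_v^{s−1/2}(t), μ·(t'−t) − Ψ^{s−1/2}(t) + Ψ_v^{s−1/2}(t) }. -/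
open SimpleGraph

section AuxWalk

open SimpleGraph

variable {V : Type*} [DecidableEq V] {G : SimpleGraph V} (δ O : V → V → ℝ) (σ : ℝ)

lemma GCS.walkWt_nil_s19 (u : V) :
    GCS.walkWt δ O σ (SimpleGraph.Walk.nil : G.Walk u u) = 0 := by
  simp [GCS.walkWt]

lemma GCS.walkWt_cons_s19 {u v w : V} (h : G.Adj u v) (p : G.Walk v w) :
    GCS.walkWt δ O σ (SimpleGraph.Walk.cons h p)
      = GCS.edgeWt δ O σ u v + GCS.walkWt δ O σ p := by
  simp [GCS.walkWt, SimpleGraph.Walk.darts_cons]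

lemma GCS.walkWt_append_s19 {u v w : V} (p : G.Walk u v) (q : G.Walk v w) :
    GCS.walkWt δ O σ (p.append q) = GCS.walkWt δ O σ p + GCS.walkWt δ O σ q := by
  simp [GCS.walkWt, SimpleGraph.Walk.darts_append]

lemma GCS.path_with_back_edge {u v : V} (huv : u ≠ v) (q : G.Walk v u) (hq : q.IsPath)
    (he : s(u, v) ∈ q.edges) : GCS.walkWt δ O σ q = GCS.edgeWt δ O σ v u := by
  cases q with
  | nil => simp at he
  | @cons _ y _ h₁ rest =>
    rw [SimpleGraph.Walk.edges_cons, List.mem_cons] at he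
    rcases he with he | he
    · have hy : y = u := by
        rcases Sym2.eq_iff.1 he with ⟨h1, _⟩ | ⟨h1, _⟩
        · exact absurd h1 huv
        · exact h1.symm
      subst hy
      have hrest : rest = SimpleGraph.Walk.nil := by
        have := ((SimpleGraph.Walk.cons_isPath_iff h₁ rest).1 hq).1
        exact SimpleGraph.Walk.isPath_iff_eq_nil.1 this
      subst hrest
      rw [GCS.walkWt_cons_s19, GCS.walkWt_nil_s19]
      ring
    · exfalso
      have hvmem : v ∈ rest.support := SimpleGraph.Walk.snd_mem_support_of_mem_edges rest he
      exact ((SimpleGraph.Walk.cons_isPath_iff h₁ rest).1 hq).2 hvmem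


lemma GCS.walkWt_ge {u w : V} (p : G.Walk u w) {C : ℝ}
    (hC : ∀ a b : V, -C ≤ GCS.edgeWt δ O σ a b) :
    -((p.length : ℝ) * C) ≤ GCS.walkWt δ O σ p := by
  induction p with
  | nil => simp [GCS.walkWt_nil_s19]
  | @cons a b c h q ih =>
    rw [GCS.walkWt_cons_s19, SimpleGraph.Walk.length_cons]
    push_cast
    linarith [hC a b, ih]

lemma GCS.exists_path_le {δ O : V → V → ℝ} {σ : ℝ}
    (hnc : GCS.NonnegCycles G δ O σ)
    (hpair : ∀ {a b : V}, G.Adj a b → 0 ≤ GCS.edgeWt δ O σ a b + GCS.edgeWt δ O σ b a) :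
    ∀ n : ℕ,
      (∀ (u : V) (c : G.Walk u u), c.length ≤ n → 0 ≤ GCS.walkWt δ O σ c) ∧
      (∀ (u w : V) (p : G.Walk u w), p.length ≤ n →
        ∃ q : G.Walk u w, q.IsPath ∧ q.length ≤ p.length ∧
          GCS.walkWt δ O σ q ≤ GCS.walkWt δ O σ p) := by
  intro n
  induction n with
  | zero =>
    constructor
    · intro u c hc
      cases c with
      | nil => simp [GCS.walkWt_nil_s19]
      | cons h q => simp [SimpleGraph.Walk.length_cons] at hc
    · intro u w p hp
      cases p with
      | nil => exact ⟨SimpleGraph.Walk.nil, SimpleGraph.Walk.IsPath.nil, le_rfl, le_rfl⟩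
      | cons h q => simp [SimpleGraph.Walk.length_cons] at hp
  | succ n ih =>
    have hA : ∀ (u : V) (c : G.Walk u u), c.length ≤ n + 1 → 0 ≤ GCS.walkWt δ O σ c := by
      intro u c hc
      cases c with
      | nil => simp [GCS.walkWt_nil_s19]
      | @cons _ v _ h q =>
        have hql : q.length ≤ n := by
          rw [SimpleGraph.Walk.length_cons] at hc; omega
        obtain ⟨q', hq'p, _, hq'le⟩ := ih.2 v u q hql
        rw [GCS.walkWt_cons_s19]
        by_cases he : s(u, v) ∈ q'.edges
        · have h1 : GCS.walkWt δ O σ q' = GCS.edgeWt δ O σ v u :=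
            GCS.path_with_back_edge δ O σ (G.ne_of_adj h) q' hq'p he
          have h2 := hpair h
          linarith
        · have hcyc : (SimpleGraph.Walk.cons h q').IsCycle :=
            (SimpleGraph.Walk.cons_isCycle_iff q' h).2 ⟨hq'p, he⟩
          have h3 := hnc u _ hcyc
          rw [GCS.walkWt_cons_s19] at h3
          linarith
    refine ⟨hA, ?_⟩
    intro u w p hp
    cases p with
    | nil => exact ⟨SimpleGraph.Walk.nil, SimpleGraph.Walk.IsPath.nil, le_rfl, le_rfl⟩
    | @cons _ v _ h q =>
      have hql : q.length ≤ n := by rw [SimpleGraph.Walk.length_cons] at hp; omega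
      obtain ⟨q₁, hq₁p, hq₁l, hq₁le⟩ := ih.2 v w q hql
      by_cases hu : u ∈ q₁.support
      · refine ⟨q₁.dropUntil u hu, hq₁p.dropUntil hu, ?_, ?_⟩
        · have h1 := SimpleGraph.Walk.length_dropUntil_le q₁ hu
          rw [SimpleGraph.Walk.length_cons]; omega
        · have hwt : GCS.walkWt δ O σ q₁
              = GCS.walkWt δ O σ (q₁.takeUntil u hu) + GCS.walkWt δ O σ (q₁.dropUntil u hu) := by
            conv_lhs => rw [← q₁.take_spec hu]
            exact GCS.walkWt_append_s19 δ O σ _ _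
          have hcwt : 0 ≤ GCS.walkWt δ O σ (SimpleGraph.Walk.cons h (q₁.takeUntil u hu)) := by
            apply hA
            have h2 := SimpleGraph.Walk.length_takeUntil_le q₁ hu
            rw [SimpleGraph.Walk.length_cons]; omega
          rw [GCS.walkWt_cons_s19] at hcwt ⊢
          linarith
      · refine ⟨SimpleGraph.Walk.cons h q₁,
          (SimpleGraph.Walk.cons_isPath_iff h q₁).2 ⟨hq₁p, hu⟩, ?_, ?_⟩
        · rw [SimpleGraph.Walk.length_cons, SimpleGraph.Walk.length_cons]; omega
        · rw [GCS.walkWt_cons_s19, GCS.walkWt_cons_s19]; linarith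

end AuxWalk

section AuxAnalysis

open Filter Topology Set

variable {ι : Type*} [Fintype ι] [Nonempty ι]

noncomputable def GCS.supF (f : ι → ℝ → ℝ) (x : ℝ) : ℝ :=
  Finset.univ.sup' Finset.univ_nonempty (fun i => f i x)

lemma GCS.le_supF (f : ι → ℝ → ℝ) (i : ι) (x : ℝ) : f i x ≤ GCS.supF f x :=
  Finset.le_sup' (fun j => f j x) (Finset.mem_univ i)

lemma GCS.exists_supF (f : ι → ℝ → ℝ) (x : ℝ) : ∃ i, GCS.supF f x = f i x := by
  obtain ⟨i, _, h⟩ := Finset.exists_mem_eq_sup' Finset.univ_nonempty (fun i => f i x)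
  exact ⟨i, h⟩

lemma GCS.continuous_finset_sup' {κ : Type*} (s : Finset κ) (hs : s.Nonempty) (f : κ → ℝ → ℝ)
    (hf : ∀ i, Continuous (f i)) : Continuous fun x => s.sup' hs fun i => f i x := by
  induction hs using Finset.Nonempty.cons_induction with
  | singleton a => simpa using hf a
  | cons a s ha hs ih =>
    have : (fun x => (Finset.cons a s ha).sup' (Finset.cons_nonempty ha) fun i => f i x)
        = fun x => max (f a x) (s.sup' hs fun i => f i x) := by
      funext x
      rw [Finset.sup'_cons hs]
    rw [this]
    exact (hf a).max ih

lemma GCS.continuous_supF (f : ι → ℝ → ℝ) (hf : ∀ i, Continuous (f i)) :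
    Continuous (GCS.supF f) :=
  GCS.continuous_finset_sup' _ _ f hf

lemma GCS.freq_slope_lt (f : ι → ℝ → ℝ)
    (hf : ∀ i, Differentiable ℝ (f i)) (x r : ℝ)
    (hmax : ∀ i, (∀ j, f j x ≤ f i x) → deriv (f i) x < r) :
    ∃ᶠ z in 𝓝[>] x, slope (GCS.supF f) x z < r := by
  by_contra hcon
  rw [Filter.not_frequently] at hcon
  have hcont : ∀ i, Continuous (f i) := fun i => (hf i).continuous
  have E1 : ∀ᶠ z in 𝓝[>] x, ∀ i, f i x = GCS.supF f x → slope (f i) x z < r := by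
    rw [eventually_all]
    intro i
    by_cases hi : f i x = GCS.supF f x
    · have hd : HasDerivAt (f i) (deriv (f i) x) x := ((hf i) x).hasDerivAt
      have ht := hasDerivAt_iff_tendsto_slope.1 hd
      have hr : deriv (f i) x < r := hmax i (fun j => hi ▸ GCS.le_supF f j x)
      have h5 : ∀ᶠ z in 𝓝[≠] x, slope (f i) x z < r := ht.eventually_lt_const hr
      have h6 : 𝓝[>] x ≤ 𝓝[≠] x :=
        nhdsWithin_mono x fun z hz => ne_of_gt hz
      exact (h5.filter_mono h6).mono fun z h _ => h
    · exact Eventually.of_forall fun z h => absurd h hi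
  have E2 : ∀ᶠ z in 𝓝[>] x, ∀ i, f i x < GCS.supF f x → f i z < GCS.supF f z := by
    rw [eventually_all]
    intro i
    by_cases hi : f i x < GCS.supF f x
    · obtain ⟨i₀, hi₀⟩ := GCS.exists_supF f x
      have h5 : ∀ᶠ z in 𝓝 x, f i z < f i₀ z :=
        ContinuousAt.eventually_lt (hcont i).continuousAt (hcont i₀).continuousAt
          (by rw [← hi₀]; exact hi)
      exact (h5.filter_mono nhdsWithin_le_nhds).mono fun z h _ =>
        h.trans_le (GCS.le_supF f i₀ z)
    · exact Eventually.of_forall fun z h => absurd h hi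
  obtain ⟨z, hz1, hz2, hz3⟩ := (E1.and (E2.and hcon)).exists
  obtain ⟨i, hiz⟩ := GCS.exists_supF f z
  have him : f i x = GCS.supF f x := by
    rcases eq_or_lt_of_le (GCS.le_supF f i x) with h | h
    · exact h
    · exact absurd (hiz ▸ hz2 i h) (lt_irrefl _)
  have heq : slope (GCS.supF f) x z = slope (f i) x z := by
    simp only [slope_def_field, hiz, him]
  exact hz3 (heq ▸ hz1 i him)

lemma GCS.sup_barrier (f : ι → ℝ → ℝ)
    (hf : ∀ i, Differentiable ℝ (f i)) {a b K c : ℝ}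
    (h0 : ∀ i, f i a ≤ K)
    (h1 : ∀ i x, deriv (f i) x ≤ c)
    (h2 : ∀ x ∈ Ico a b, ∀ i, (∀ j, f j x ≤ f i x) → K ≤ f i x → deriv (f i) x ≤ 0) :
    ∀ x ∈ Icc a b, ∀ i, f i x ≤ K := by
  intro x hx i
  have hab : a ≤ b := hx.1.trans hx.2
  by_contra hcon
  push_neg at hcon
  set ε : ℝ := (f i x - K) / (b - a + 1) with hεdef
  have hba : (0:ℝ) < b - a + 1 := by linarith
  have hε : 0 < ε := div_pos (by linarith) hba
  have key : ∀ ⦃y⦄, y ∈ Icc a b → GCS.supF f y ≤ K + ε * (y - a) := by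
    apply image_le_of_liminf_slope_right_lt_deriv_boundary (f := GCS.supF f)
      (f' := fun y => if GCS.supF f y = K + ε * (y - a) then 0 else c)
      (B := fun y => K + ε * (y - a)) (B' := fun _ => ε)
    · exact (GCS.continuous_supF f fun j => (hf j).continuous).continuousOn
    · intro y hy r hr
      by_cases hty : GCS.supF f y = K + ε * (y - a)
      · replace hr : (if GCS.supF f y = K + ε * (y - a) then (0:ℝ) else c) < r := hr
        rw [if_pos hty] at hr
        apply GCS.freq_slope_lt f hf y r
        intro j hj
        have hfj : f j y = GCS.supF f y := by
          refine le_antisymm (GCS.le_supF f j y) ?_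
          obtain ⟨j₀, hj₀⟩ := GCS.exists_supF f y
          rw [hj₀]; exact hj j₀
        have hKf : K ≤ f j y := by
          rw [hfj, hty]
          have : 0 ≤ ε * (y - a) := mul_nonneg hε.le (by linarith [hy.1])
          linarith
        have := h2 y hy j hj hKf
        linarith
      · replace hr : (if GCS.supF f y = K + ε * (y - a) then (0:ℝ) else c) < r := hr
        rw [if_neg hty] at hr
        apply GCS.freq_slope_lt f hf y r
        intro j _
        exact lt_of_le_of_lt (h1 j y) hr
    · obtain ⟨i₀, h₀⟩ := GCS.exists_supF f a
      rw [h₀]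
      simpa using h0 i₀
    · intro y
      have : HasDerivAt (fun y : ℝ => K + ε * (y - a)) ε y := by
        simpa using (((hasDerivAt_id y).sub_const a).const_mul ε).const_add K
      exact this
    · intro y _ hty
      have hty' : GCS.supF f y = K + ε * (y - a) := hty
      show (if GCS.supF f y = K + ε * (y - a) then (0:ℝ) else c) < ε
      rw [if_pos hty']
      exact hε
  have hkey := key hx
  have hle : f i x ≤ K + ε * (x - a) := (GCS.le_supF f i x).trans hkey
  have hx1 : ε * (x - a) ≤ ε * (b - a) := by
    apply mul_le_mul_of_nonneg_left _ hε.le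
    linarith [hx.2]
  have hx2 : ε * (b - a) < ε * (b - a + 1) := by nlinarith
  have : ε * (b - a + 1) = f i x - K := by
    rw [hεdef]; field_simp
  linarith

end AuxAnalysis

/-- external synchronization: if `Ψ_{v₀}^{s-1/2}(t) = 0`, then
`L_v(t') - L_v(t) ≥ (t'-t) + min{Ψ_v^{s-1/2}(t), μ(t'-t) - Ψ^{s-1/2}(t) + Ψ_v^{s-1/2}(t)}`. -/
theorem virtual_catchup
    {V' : Type*} [Fintype V'] [DecidableEq V'] [Nonempty V']
    (v₀ : V') (H : SimpleGraph V') (hconn : H.Connected)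
    (δ O : V' → V' → ℝ)
    (hδpos : ∀ v w, H.Adj v w → 0 < δ v w)
    (hδsym : ∀ v w, H.Adj v w → δ v w = δ w v)
    (hOanti : ∀ v w, H.Adj v w → O v w = -O w v)
    (L : V' → ℝ → ℝ) (ϑ μ ζ : ℝ)
    (hϑ : 1 < ϑ) (hμ : 0 < μ) (hζϑ : ϑ < ζ) (hζμ : ζ < 1 + μ)
    (hdiff : ∀ v, Differentiable ℝ (L v))
    (hv₀ : ∀ t : ℝ, deriv (L v₀) t = ζ)
    (hlo : ∀ v : V', v ≠ v₀ → ∀ t : ℝ, 1 ≤ deriv (L v) t)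
    (hhi : ∀ v : V', v ≠ v₀ → ∀ t : ℝ, deriv (L v) t ≤ ϑ * (1 + μ))
    (hslow : ∀ v : V', v ≠ v₀ → ∀ t : ℝ,
      (∃ s : ℕ, GCS.SlowCondAt H δ O L v t s) → deriv (L v) t ≤ ϑ)
    (hfast : ∀ v : V', v ≠ v₀ → ∀ t : ℝ,
      (∃ s : ℕ, GCS.FastCondAt H δ O L v t s) → 1 + μ ≤ deriv (L v) t)
    (s : ℕ) (hs1 : 1 ≤ s) (hnc : GCS.NonnegCycles H δ O ((s : ℝ) - 1/2))
    (v : V') (t t' : ℝ) (htt' : t < t')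
    (hzero : GCS.Psi H δ O ((s : ℝ) - 1/2) L v₀ t = 0) :
    (t' - t) + min (GCS.Psi H δ O ((s : ℝ) - 1/2) L v t)
        (μ * (t' - t) - GCS.PsiAll H δ O ((s : ℝ) - 1/2) L t
          + GCS.Psi H δ O ((s : ℝ) - 1/2) L v t) ≤
      L v t' - L v t := by
  classical
  set σ : ℝ := (s : ℝ) - 1/2 with hσdef
  have hs1' : (1:ℝ) ≤ (s:ℝ) := by exact_mod_cast hs1
  have hσpos : 0 < σ := by rw [hσdef]; linarith
  have hζ1 : 1 < ζ := hϑ.trans hζϑ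
  have hrate1 : ∀ (u : V') (x : ℝ), 1 ≤ deriv (L u) x := by
    intro u x
    by_cases hu : u = v₀
    · rw [hu, hv₀]; linarith
    · exact hlo u hu x
  have hmono : ∀ u : V', Monotone fun τ => L u τ - τ := by
    intro u
    have hdf : Differentiable ℝ (fun τ => L u τ - τ) :=
      fun y => ((hdiff u) y).sub differentiableAt_id
    apply monotone_of_deriv_nonneg hdf
    intro x
    have hder : HasDerivAt (fun τ => L u τ - τ) (deriv (L u) x - 1) x :=
      ((hdiff u) x).hasDerivAt.sub (hasDerivAt_id x)
    rw [hder.deriv]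
    linarith [hrate1 u x]
  have hpair : ∀ {a b : V'}, H.Adj a b → 0 ≤ GCS.edgeWt δ O σ a b + GCS.edgeWt δ O σ b a := by
    intro a b hab
    have h1 := hδpos a b hab
    have h2 := hδsym a b hab
    have h3 := hOanti a b hab
    have e1 : GCS.edgeWt δ O σ a b = 4 * σ * δ a b - O a b := rfl
    have e2 : GCS.edgeWt δ O σ b a = 4 * σ * δ b a - O b a := rfl
    rw [e1, e2, ← h2]
    nlinarith
  have hAB := GCS.exists_path_le hnc hpair
  -- a uniform lower bound on walk weights
  set C : ℝ := ∑ a : V', ∑ b : V', |GCS.edgeWt δ O σ a b| with hCdef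
  have hCedge : ∀ a b : V', |GCS.edgeWt δ O σ a b| ≤ C := by
    intro a b
    rw [hCdef]
    calc |GCS.edgeWt δ O σ a b| ≤ ∑ b' : V', |GCS.edgeWt δ O σ a b'| :=
        Finset.single_le_sum (f := fun b' => |GCS.edgeWt δ O σ a b'|)
          (fun _ _ => abs_nonneg _) (Finset.mem_univ b)
      _ ≤ _ := Finset.single_le_sum (f := fun a' => ∑ b' : V', |GCS.edgeWt δ O σ a' b'|)
          (fun _ _ => Finset.sum_nonneg fun _ _ => abs_nonneg _) (Finset.mem_univ a)
  have hC0 : 0 ≤ C := (abs_nonneg _).trans (hCedge (Classical.arbitrary V') (Classical.arbitrary V'))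
  have hwalk_lb : ∀ (a b : V') (p : H.Walk a b),
      -((Fintype.card V' : ℝ) * C) ≤ GCS.walkWt δ O σ p := by
    intro a b p
    obtain ⟨q, hqpath, _, hqle⟩ := (hAB p.length).2 a b p le_rfl
    refine le_trans ?_ hqle
    have hlen : (q.length : ℝ) ≤ (Fintype.card V' : ℝ) := by
      exact_mod_cast hqpath.length_lt.le
    have h1 : -((q.length : ℝ) * C) ≤ GCS.walkWt δ O σ q :=
      GCS.walkWt_ge δ O σ q fun a' b' => by linarith [(abs_le.1 (hCedge a' b')).1]
    nlinarith
  -- basic facts about Psi at time t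
  set Sset : V' → Set ℝ :=
    fun u => {x | ∃ w, ∃ p : H.Walk u w, x = L w t - L u t - GCS.walkWt δ O σ p} with hSdef
  have hPsiS : ∀ u, GCS.Psi H δ O σ L u t = sSup (Sset u) := fun u => rfl
  set maxL : ℝ := Finset.univ.sup' Finset.univ_nonempty fun w => L w t with hmaxLdef
  have hSbdd : ∀ u : V', BddAbove (Sset u) := by
    intro u
    refine ⟨maxL - L u t + (Fintype.card V' : ℝ) * C, ?_⟩
    rintro x ⟨w, p, rfl⟩
    have h1 := hwalk_lb u w p
    have h2 : L w t ≤ maxL := Finset.le_sup' (fun w => L w t) (Finset.mem_univ w)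
    linarith
  have hSne : ∀ u : V', (0:ℝ) ∈ Sset u := by
    intro u
    exact ⟨u, SimpleGraph.Walk.nil, by simp [GCS.walkWt_nil_s19]⟩
  have hPsi_mem : ∀ (u w : V') (p : H.Walk u w),
      L w t - L u t - GCS.walkWt δ O σ p ≤ GCS.Psi H δ O σ L u t := by
    intro u w p
    rw [hPsiS u]
    exact le_csSup (hSbdd u) ⟨w, p, rfl⟩
  have hPsi_le : ∀ (u : V') (b : ℝ),
      (∀ (w : V') (p : H.Walk u w), L w t - L u t - GCS.walkWt δ O σ p ≤ b) →
      GCS.Psi H δ O σ L u t ≤ b := by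
    intro u b hb
    rw [hPsiS u]
    apply csSup_le ⟨0, hSne u⟩
    rintro x ⟨w, p, rfl⟩
    exact hb w p
  have hPsi0 : ∀ u : V', 0 ≤ GCS.Psi H δ O σ L u t := by
    intro u
    rw [hPsiS u]
    exact le_csSup (hSbdd u) (hSne u)
  have hPsiAll : ∀ u : V', GCS.Psi H δ O σ L u t ≤ GCS.PsiAll H δ O σ L t := by
    intro u
    exact le_ciSup (f := fun u => GCS.Psi H δ O σ L u t)
      (Set.Finite.bddAbove (Set.finite_range _)) u
  set Bv : ℝ := GCS.PsiAll H δ O σ L t with hBdef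
  have hB0 : 0 ≤ Bv := (hPsi0 v).trans (hPsiAll v)
  -- Bellman facts about M
  set M : V' → ℝ := fun u => L u t + GCS.Psi H δ O σ L u t with hMdef
  have hMeq : ∀ u, M u = L u t + GCS.Psi H δ O σ L u t := fun u => rfl
  have hF2 : ∀ u w₁ : V', H.Adj w₁ u → M u - GCS.edgeWt δ O σ w₁ u ≤ M w₁ := by
    intro u w₁ hadj
    have key : GCS.Psi H δ O σ L u t ≤
        GCS.Psi H δ O σ L w₁ t + (L w₁ t - L u t + GCS.edgeWt δ O σ w₁ u) := by
      apply hPsi_le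
      intro w p
      have h1 := hPsi_mem w₁ w (SimpleGraph.Walk.cons hadj p)
      rw [GCS.walkWt_cons_s19] at h1
      linarith
    rw [hMeq u, hMeq w₁]
    linarith
  have hF3 : ∀ u : V', 0 < GCS.Psi H δ O σ L u t →
      ∃ w₁, H.Adj u w₁ ∧ M u + GCS.edgeWt δ O σ u w₁ ≤ M w₁ := by
    intro u hpos
    by_contra hcon
    push_neg at hcon
    set N : Finset V' := Finset.univ.filter (H.Adj u) with hNdef
    rcases N.eq_empty_or_nonempty with hN | hN
    · have : GCS.Psi H δ O σ L u t ≤ 0 := by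
        apply hPsi_le
        intro w p
        cases p with
        | nil => simp [GCS.walkWt_nil_s19]
        | cons h q =>
          exfalso
          have : _ ∈ N := Finset.mem_filter.2 ⟨Finset.mem_univ _, h⟩
          rw [hN] at this
          exact absurd this (Finset.notMem_empty _)
      linarith
    · set κ : ℝ := N.inf' hN fun w₁ => M u + GCS.edgeWt δ O σ u w₁ - M w₁ with hκdef
      have hκpos : 0 < κ := by
        obtain ⟨w₀, hw₀, heq⟩ := Finset.exists_mem_eq_inf' hN fun w₁ => M u + GCS.edgeWt δ O σ u w₁ - M w₁
        have hadj : H.Adj u w₀ := (Finset.mem_filter.1 hw₀).2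
        rw [hκdef, heq]
        linarith [hcon w₀ hadj]
      have key : GCS.Psi H δ O σ L u t ≤ GCS.Psi H δ O σ L u t - min κ (GCS.Psi H δ O σ L u t) := by
        apply hPsi_le
        intro w p
        cases p with
        | nil =>
          have hmr : min κ (GCS.Psi H δ O σ L u t) ≤ GCS.Psi H δ O σ L u t := min_le_right _ _
          rw [GCS.walkWt_nil_s19]
          linarith
        | @cons _ w₁ _ h q =>
          have hw₁N : w₁ ∈ N := Finset.mem_filter.2 ⟨Finset.mem_univ _, h⟩
          have hinf : κ ≤ M u + GCS.edgeWt δ O σ u w₁ - M w₁ := by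
            rw [hκdef]
            exact Finset.inf'_le _ hw₁N
          have h1 := hPsi_mem w₁ w q
          rw [GCS.walkWt_cons_s19]
          have hm : min κ (GCS.Psi H δ O σ L u t) ≤ κ := min_le_left _ _
          rw [hMeq u, hMeq w₁] at hinf
          linarith
      have : 0 < min κ (GCS.Psi H δ O σ L u t) := lt_min hκpos hpos
      linarith
  -- the barrier functions
  set f : V' → ℝ → ℝ := fun u τ => M u + (1 + μ) * (τ - t) - L u τ with hfdef
  have hfeq : ∀ (u : V') (x : ℝ), f u x = M u + (1 + μ) * (x - t) - L u x := fun u x => rfl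
  have hfder : ∀ (u : V') (x : ℝ), HasDerivAt (f u) ((1 + μ) - deriv (L u) x) x := by
    intro u x
    have h1 : HasDerivAt (fun τ : ℝ => M u + (1 + μ) * (τ - t)) (1 + μ) x := by
      simpa using (((hasDerivAt_id x).sub_const t).const_mul (1 + μ)).const_add (M u)
    exact h1.sub ((hdiff u) x).hasDerivAt
  have hfdiff : ∀ u : V', Differentiable ℝ (f u) := fun u x => (hfder u x).differentiableAt
  have hfderiv : ∀ (u : V') (x : ℝ), deriv (f u) x = (1 + μ) - deriv (L u) x :=
    fun u x => (hfder u x).deriv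
  set t₁ : ℝ := min t' (t + Bv / μ) with ht₁def
  have htt₁ : t ≤ t₁ := by
    apply le_min htt'.le
    have : 0 ≤ Bv / μ := div_nonneg hB0 hμ.le
    linarith
  have hcast : ((s - 1 : ℕ) : ℝ) = (s : ℝ) - 1 := by
    push_cast [Nat.cast_sub hs1]
    ring
  have h4σ : 4 * ((s : ℝ) - 1) + 2 = 4 * σ := by rw [hσdef]; ring
  -- barrier hypotheses
  have h0' : ∀ u : V', f u t ≤ Bv := by
    intro u
    rw [hfeq u t, hMeq u]
    have : (1 + μ) * (t - t) = 0 := by ring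
    linarith [hPsiAll u]
  have h1' : ∀ (u : V') (x : ℝ), deriv (f u) x ≤ μ := by
    intro u x
    rw [hfderiv u x]
    linarith [hrate1 u x]
  have h2' : ∀ x ∈ Set.Ico t t₁, ∀ u : V',
      (∀ j, f j x ≤ f u x) → Bv ≤ f u x → deriv (f u) x ≤ 0 := by
    intro x hx u hmaxu hKf
    have hxt : t ≤ x := hx.1
    have hμx : μ * (x - t) < Bv := by
      have hxlt : x < t + Bv / μ := lt_of_lt_of_le hx.2 (min_le_right _ _)
      have h5 : μ * (x - t) < μ * (Bv / μ) := by
        apply mul_lt_mul_of_pos_left _ hμ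
        linarith
      have h6 : μ * (Bv / μ) = Bv := by field_simp
      linarith
    have hpsi_pos : 0 < GCS.Psi H δ O σ L u t := by
      by_contra hle
      push_neg at hle
      have hψ0 : GCS.Psi H δ O σ L u t = 0 := le_antisymm hle (hPsi0 u)
      have hLx : L u t - t ≤ L u x - x := hmono u hxt
      have hexp : (1 + μ) * (x - t) = (x - t) + μ * (x - t) := by ring
      have : f u x ≤ μ * (x - t) := by
        rw [hfeq u x, hMeq u, hψ0]
        linarith
      linarith
    have hunv : u ≠ v₀ := by
      rintro rfl
      rw [hzero] at hpsi_pos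
      exact lt_irrefl 0 hpsi_pos
    obtain ⟨w₁, hadj1, hM1⟩ := hF3 u hpsi_pos
    have hfc : GCS.FastCondAt H δ O L u x (s - 1) := by
      constructor
      · refine ⟨w₁, hadj1, ?_⟩
        have hfw := hmaxu w₁
        rw [hfeq u x, hfeq w₁ x] at hfw
        have hML : M w₁ - M u ≤ L w₁ x - L u x := by linarith
        have hedge : GCS.edgeWt δ O σ u w₁ ≤ L w₁ x - L u x := by linarith
        have he : GCS.edgeWt δ O σ u w₁ = 4 * σ * δ u w₁ - O u w₁ := rfl
        rw [he] at hedge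
        rw [hcast, h4σ]
        linarith
      · intro w hadj
        have hfw := hmaxu w
        rw [hfeq u x, hfeq w x] at hfw
        have hML : L u x - L w x ≤ M u - M w := by linarith
        have h2'' := hF2 u w hadj.symm
        have he : GCS.edgeWt δ O σ w u = 4 * σ * δ w u - O w u := rfl
        rw [he] at h2''
        have hδs := hδsym u w hadj
        have hOs := hOanti u w hadj
        rw [hcast, h4σ]
        rw [← hδs] at h2''
        linarith
    have hd := hfast u hunv x ⟨s - 1, hfc⟩
    rw [hfderiv u x]
    linarith
  have hbar := GCS.sup_barrier f hfdiff (a := t) (b := t₁) (K := Bv) (c := μ) h0' h1' h2'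
  have hcat : f v t₁ ≤ Bv := hbar t₁ ⟨htt₁, le_rfl⟩ v
  rw [hfeq v t₁, hMeq v] at hcat
  rcases le_or_gt (t + Bv / μ) t' with hcase | hcase
  · have ht₁' : t₁ = t + Bv / μ := min_eq_right hcase
    have h2 : L v t₁ - t₁ ≤ L v t' - t' := hmono v (min_le_left t' (t + Bv / μ))
    have hμt₁ : μ * (t₁ - t) = Bv := by
      rw [ht₁']
      field_simp
      ring
    have hminle : min (GCS.Psi H δ O σ L v t) (μ * (t' - t) - Bv + GCS.Psi H δ O σ L v t)
        ≤ GCS.Psi H δ O σ L v t := min_le_left _ _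
    have hexp : (1 + μ) * (t₁ - t) = (t₁ - t) + μ * (t₁ - t) := by ring
    linarith
  · have ht₁' : t₁ = t' := min_eq_left hcase.le
    rw [ht₁'] at hcat
    have hminle : min (GCS.Psi H δ O σ L v t) (μ * (t' - t) - Bv + GCS.Psi H δ O σ L v t)
        ≤ μ * (t' - t) - Bv + GCS.Psi H δ O σ L v t := min_le_right _ _
    have hexp : (1 + μ) * (t' - t) = (t' - t) + μ * (t' - t) := by ring
    linarith
end
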